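/- With the same setup, if l_x > o_y (the r_x-th run of x is longer than the available prefix o_y of the r_y-th run of y), then SP(x, y, r_x, r_y, o_y) = min(SP(x, y, r_x, r_y, o_y − 1) + d, SP(y, x, r_y − 1, r_x, l_x − o_y) + d·o_y), where SP(y, x, ·, ·, ·) is the symmetric subproblem with the roles of x and y swapped. -/

import Mathlib

open scoped BigOperators

variable {α : Type*}

/-- `xb` is the expansion of `x` obtained by replacing the `i`-th letter of `x`
with `ks[i] ≥ 1` consecutive copies of itself (equivalently, by extending runs). -/
def IsExpansionWith (x : List α) (ks : List ℕ) (xb : List α) : Prop :=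
  ks.length = x.length ∧ (∀ k ∈ ks, 1 ≤ k) ∧
    xb = (x.zip ks).flatMap fun p => List.replicate p.2 p.1

/-- `xb` is an expansion of `x` (obtained by extending runs). -/
def IsExpansion (x xb : List α) : Prop := ∃ ks, IsExpansionWith x ks xb

/-- The cost of a correspondence: sum of pointwise distances. -/
def corrCost (d : α → α → ℝ) (xb yb : List α) : ℝ :=
  ((xb.zip yb).map fun p => d p.1 p.2).sum

/-- A correspondence between `x` and `y`: a pair of equal-length expansions. -/
def IsCorrespondence (x y xb yb : List α) : Prop :=
  IsExpansion x xb ∧ IsExpansion y yb ∧ xb.length = yb.length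

/-- Dynamic time warping distance: minimum cost of a correspondence. -/
noncomputable def dtw (d : α → α → ℝ) (x y : List α) : ℝ :=
  sInf {c | ∃ xb yb, IsCorrespondence x y xb yb ∧ c = corrCost d xb yb}

/-- The maximal runs of equal letters of a list. -/
def runsOf [DecidableEq α] (x : List α) : List (List α) := x.splitBy (· == ·)

/-- Number of runs. -/
def numRuns [DecidableEq α] (x : List α) : ℕ := (runsOf x).length

/-- Length of the final run. -/
def lastRunLen [DecidableEq α] (x : List α) : ℕ := ((runsOf x).getLastD []).length

/-- Length of the `i`-th run (0-indexed). -/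
def runLen [DecidableEq α] (x : List α) (i : ℕ) : ℕ := ((runsOf x).getD i []).length

/-- The letter populating the `i`-th run (0-indexed). -/
def runLetter [DecidableEq α] [Inhabited α] (x : List α) (i : ℕ) : α :=
  ((runsOf x).getD i []).headI

/-- The concatenation of the first `k` runs of `x`. -/
def firstRuns [DecidableEq α] (k : ℕ) (x : List α) : List α := ((runsOf x).take k).flatten

/-- The prefix of `y` consisting of its first `ry` runs, up through the `oy`-th
letter of the `ry`-th run (runs are 1-indexed here). -/
def runPrefix [DecidableEq α] (ry oy : ℕ) (y : List α) : List α :=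
  firstRuns (ry - 1) y ++ ((runsOf y).getD (ry - 1) []).take oy

/-- The subproblem `SP(x, y, rx, ry, oy)`: the minimum cost of a correspondence
between the first `rx` runs of `x` and the prefix of `y` ending at the `oy`-th
letter of its `ry`-th run, under the constraint that the final (`ry`-th) run of
the `y`-prefix is not extended; `⊤` if no such correspondence exists. -/
noncomputable def SP [DecidableEq α] (d : α → α → ℝ) (x y : List α) (rx ry oy : ℕ) : EReal :=
  sInf ((fun p : List α × List α => ((corrCost d p.1 p.2 : ℝ) : EReal)) ''
    {p | IsCorrespondence (firstRuns rx x) (runPrefix ry oy y) p.1 p.2 ∧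
         (0 < oy → lastRunLen p.2 = oy)})

/-- Generalized edit distance over a metric with null character `nul`:
insertion/deletion of `l` costs `d nul l`, substitution of `l` by `l'` costs `d l l'`. -/
noncomputable def ged (d : α → α → ℝ) (nul : α) : List α → List α → ℝ
  | [], [] => 0
  | [], b :: ys => d nul b + ged d nul [] ys
  | a :: xs, [] => d nul a + ged d nul xs []
  | a :: xs, b :: ys =>
      min (d a b + ged d nul xs ys)
        (min (d nul a + ged d nul xs (b :: ys)) (d nul b + ged d nul (a :: xs) ys))
  termination_by x y => x.length + y.length

/-- Simple (Hamming/Levenshtein) edit distance: unit-cost insertions, deletions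
and substitutions. -/
def edH [DecidableEq α] : List α → List α → ℕ
  | [], ys => ys.length
  | xs, [] => xs.length
  | a :: xs, b :: ys =>
      min ((if a = b then 0 else 1) + edH xs ys)
        (min (1 + edH xs (b :: ys)) (1 + edH (a :: xs) ys))
  termination_by x y => x.length + y.length

/-- Simple edit distance with only unit-cost insertions and deletions. -/
def edS [DecidableEq α] : List α → List α → ℕ
  | [], ys => ys.length
  | xs, [] => xs.length
  | a :: xs, b :: ys =>
      if a = b then
        min (edS xs ys) (min (1 + edS xs (b :: ys)) (1 + edS (a :: xs) ys))
      else
        min (1 + edS xs (b :: ys)) (1 + edS (a :: xs) ys)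
  termination_by x y => x.length + y.length

/-- The padded string `p(x) = ∅ x₁ ∅ x₂ ∅ ⋯ xₙ ∅`. -/
def pad (nul : α) (x : List α) : List α := nul :: x.flatMap fun a => [a, nul]

/-- The `r`-simplification for edit distance: remove all letters of magnitude at most `r`. -/
noncomputable def sEd [MetricSpace α] (nul : α) (r : ℝ) (x : List α) : List α :=
  x.filter fun l => decide (r < dist nul l)

open List
set_option linter.unusedSectionVars false

lemma chain'_eq_replicate [Inhabited α] {l : List α} (h : l.IsChain (· = ·)) :
    l = List.replicate l.length l.headI := by
  induction l with
  | nil => simp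
  | cons a t ih =>
    rw [isChain_cons] at h
    have ht := ih h.2
    cases t with
    | nil => simp
    | cons b t' =>
      have hab : a = b := (h.1 b rfl)
      subst hab
      have ht' : a :: t' = replicate (a :: t').length a := by simpa [headI] using ht
      show a :: a :: t' = replicate (a :: a :: t').length (a :: a :: t').headI
      rw [show (a :: a :: t').headI = a from rfl, length_cons, replicate_succ]
      exact congrArg (List.cons a) ht'

lemma runs_unique_aux (r : α → α → Bool) :
    ∀ n (l : List α), l.length ≤ n → ∀ (gs hs : List (List α)),
    gs.flatten = l → hs.flatten = l → [] ∉ gs → [] ∉ hs →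
    (∀ g ∈ gs, g.IsChain (fun x y => r x y = true)) →
    (∀ g ∈ hs, g.IsChain (fun x y => r x y = true)) →
    gs.IsChain (fun a b => ∃ ha hb, r (a.getLast ha) (b.head hb) = false) →
    hs.IsChain (fun a b => ∃ ha hb, r (a.getLast ha) (b.head hb) = false) →
    gs = hs := by
  have key : ∀ (l : List α) (g h : List α) (gs' hs' : List (List α)),
      (g :: gs').flatten = l → (h :: hs').flatten = l → g ≠ [] → h ≠ [] →
      g.length ≤ h.length →
      (∀ m ∈ (h :: hs'), m.IsChain (fun x y => r x y = true)) →
      (g :: gs').IsChain (fun a b => ∃ ha hb, r (a.getLast ha) (b.head hb) = false) →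
      [] ∉ gs' →
      g = h := by
    intro l g h gs' hs' hg hh hgne hhne hlen hch hbr hnil
    have hpre : g <+: h := by
      refine prefix_of_prefix_length_le (l₃ := l) ?_ ?_ hlen
      · exact hg ▸ (by simp [flatten_cons] : g <+: (g :: gs').flatten)
      · exact hh ▸ (by simp [flatten_cons] : h <+: (h :: hs').flatten)
    obtain ⟨t, rfl⟩ := hpre
    rcases eq_or_ne t [] with rfl | htne
    · simp
    · exfalso
      have hft : gs'.flatten = t ++ hs'.flatten := by
        have h2 : g ++ gs'.flatten = (g ++ t) ++ hs'.flatten := by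
          rw [← flatten_cons, ← flatten_cons, hg, hh]
        rwa [append_assoc, append_cancel_left_eq] at h2
      obtain ⟨c, t', rfl⟩ := List.exists_cons_of_ne_nil htne
      cases gs' with
      | nil => simp at hft
      | cons g1 gs'' =>
        have hg1ne : g1 ≠ [] := by intro h0; exact hnil (by simp [h0])
        have h3 : g1 ++ gs''.flatten = c :: (t' ++ hs'.flatten) := by
          simpa using hft
        have hg1head : g1.head hg1ne = c := by
          cases g1 with
          | nil => exact absurd rfl hg1ne
          | cons x g1' =>
            simp only [cons_append, cons.injEq] at h3
            simpa using h3.1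
        obtain ⟨ha, hb, hfalse⟩ := (isChain_cons_cons.1 hbr).1
        have hchh := hch _ (mem_cons_self)
        rw [isChain_append] at hchh
        have htrue : r (g.getLast hgne) c = true := by
          apply hchh.2.2
          · rw [getLast?_eq_getLast hgne]; rfl
          · rfl
        rw [hg1head] at hfalse
        have heq : g.getLast ha = g.getLast hgne := rfl
        rw [heq, htrue] at hfalse
        cases hfalse
  intro n
  induction n with
  | zero =>
    intro l hl gs hs hg hh hgnil hhnil _ _ _ _
    have hl0 : l = [] := by
      cases l with | nil => rfl | cons a t => simp at hl
    subst hl0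
    have e1 : gs = [] := by
      cases gs with
      | nil => rfl
      | cons g gs' =>
        exfalso
        have hge : g = [] := by
          simp only [flatten_cons] at hg
          exact (append_eq_nil_iff.mp hg).1
        exact hgnil (hge ▸ mem_cons_self)
    have e2 : hs = [] := by
      cases hs with
      | nil => rfl
      | cons h hs' =>
        exfalso
        have hhe : h = [] := by
          simp only [flatten_cons] at hh
          exact (append_eq_nil_iff.mp hh).1
        exact hhnil (hhe ▸ mem_cons_self)
    rw [e1, e2]
  | succ n ih =>
    intro l hl gs hs hg hh hgnil hhnil hgch hhch hgbr hhbr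
    cases l with
    | nil =>
      exact ih [] (by simp) gs hs hg hh hgnil hhnil hgch hhch hgbr hhbr
    | cons a l' =>
      cases gs with
      | nil => simp at hg
      | cons g gs' =>
        cases hs with
        | nil => simp at hh
        | cons h hs' =>
          have hgne : g ≠ [] := fun h0 => hgnil (by simp [h0])
          have hhne : h ≠ [] := fun h0 => hhnil (by simp [h0])
          have hgh : g = h := by
            rcases le_total g.length h.length with hle | hle
            · exact key _ g h gs' hs' hg hh hgne hhne hle hhch hgbr
                (fun h0 => hgnil (mem_cons_of_mem _ h0))
            · exact (key _ h g hs' gs' hh hg hhne hgne hle hgch hhbr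
                (fun h0 => hhnil (mem_cons_of_mem _ h0))).symm
          subst hgh
          have hft : gs'.flatten = hs'.flatten := by
            have h2 : g ++ gs'.flatten = g ++ hs'.flatten := by
              rw [← flatten_cons, ← flatten_cons, hg, hh]
            rwa [append_cancel_left_eq] at h2
          have hlen' : gs'.flatten.length ≤ n := by
            have h1 : 1 ≤ g.length := length_pos_iff.2 hgne
            have h2 : g.length + gs'.flatten.length = l'.length + 1 := by
              have h4 := congrArg List.length hg
              simp only [flatten_cons, length_append, length_cons] at h4
              omega
            have h3 : l'.length + 1 ≤ n + 1 := by simpa using hl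
            omega
          have htail := ih gs'.flatten hlen' gs' hs' rfl hft.symm
            (fun h0 => hgnil (mem_cons_of_mem _ h0))
            (fun h0 => hhnil (mem_cons_of_mem _ h0))
            (fun m hm => hgch m (mem_cons_of_mem _ hm))
            (fun m hm => hhch m (mem_cons_of_mem _ hm))
            (hgbr.tail) (hhbr.tail)
          rw [htail]

/-- Any valid run-decomposition equals `splitBy`. -/
lemma eq_splitBy {r : α → α → Bool} {l : List α} {gs : List (List α)}
    (hflat : gs.flatten = l) (hnil : [] ∉ gs)
    (hch : ∀ g ∈ gs, g.IsChain (fun x y => r x y = true))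
    (hbr : gs.IsChain (fun a b => ∃ ha hb, r (a.getLast ha) (b.head hb) = false)) :
    gs = l.splitBy r := by
  refine runs_unique_aux r l.length l le_rfl gs (l.splitBy r) hflat
    (flatten_splitBy r l) hnil (nil_notMem_splitBy r l) hch
    (fun g hg => isChain_of_mem_splitBy hg) hbr (isChain_getLast_head_splitBy r l)

set_option linter.unusedSectionVars false

section Lemmas
variable [DecidableEq α] [Inhabited α]

lemma chain'_beq_replicate (n : ℕ) (b : α) :
    (replicate n b).IsChain (fun x y => (x == y) = true) := by
  induction n with
  | zero => simp
  | succ m ih =>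
    rw [replicate_succ]
    cases m with
    | zero => simp
    | succ m' =>
      rw [isChain_cons]
      refine ⟨fun y hy => ?_, ih⟩
      rw [head?_replicate] at hy
      simp at hy
      simp [hy]

lemma flatten_getLast? {gs : List (List α)} (hnil : [] ∉ gs) :
    gs.flatten.getLast? = (gs.getLastD []).getLast? := by
  cases hgs : gs.eq_nil_or_concat with
  | inl h => subst h; simp
  | inr h =>
    obtain ⟨L, g, rfl⟩ := h
    have hgne : g ≠ [] := fun h0 => hnil (by simp [concat_eq_append, h0])
    rw [concat_eq_append, flatten_append, getLast?_append, getLastD_concat]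
    simp only [flatten_cons, flatten_nil, append_nil]
    rw [getLast?_eq_getLast hgne]
    rfl

/-- Key structural lemma: appending a fresh run. -/
lemma runsOf_append_replicate {w : List α} {b : α} {n : ℕ} (hn : 1 ≤ n)
    (hw : ∀ c, w.getLast? = some c → c ≠ b) :
    runsOf (w ++ replicate n b) = runsOf w ++ [replicate n b] := by
  have hrepne : replicate n b ≠ [] := by
    intro h0
    have := congrArg List.length h0
    simp at this
    omega
  simp only [runsOf]
  refine (eq_splitBy ?_ ?_ ?_ ?_).symm
  · rw [flatten_append]
    simp only [flatten_cons, flatten_nil, append_nil]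
    rw [flatten_splitBy]
  · intro hmem
    rcases mem_append.1 hmem with h | h
    · exact nil_notMem_splitBy _ _ h
    · simp only [mem_singleton] at h
      exact hrepne h.symm
  · intro g hg
    rcases mem_append.1 hg with h | h
    · exact isChain_of_mem_splitBy h
    · simp only [mem_singleton] at h
      subst h
      exact chain'_beq_replicate n b
  · rw [isChain_append]
    refine ⟨isChain_getLast_head_splitBy _ _, isChain_singleton _, ?_⟩
    intro x hx y hy
    simp only [head?_cons, Option.mem_def, Option.some.injEq] at hy
    subst hy
    -- x is the last block of splitBy w
    have hxne : x ≠ [] := by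
      intro h0
      apply nil_notMem_splitBy (fun a b => a == b) w
      have : x ∈ w.splitBy (· == ·) := by
        have := hx
        simp only [Option.mem_def] at this
        exact mem_of_mem_getLast? this
      exact h0 ▸ this
    refine ⟨hxne, hrepne, ?_⟩
    rw [beq_eq_false_iff_ne]
    have hflat : w.getLast? = some (x.getLast hxne) := by
      have h1 : (w.splitBy (· == ·)).flatten.getLast? = ((w.splitBy (· == ·)).getLastD []).getLast? :=
        flatten_getLast? (nil_notMem_splitBy _ _)
      rw [flatten_splitBy] at h1
      have h2 : (w.splitBy (· == ·)).getLastD [] = x := by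
        have := hx
        simp only [Option.mem_def] at this
        cases hsw : w.splitBy (· == ·) with
        | nil => rw [hsw] at this; simp at this
        | cons g gs =>
          rw [hsw] at this
          rw [getLastD_eq_getLast?, this]
          rfl
      rw [h1, h2, getLast?_eq_getLast hxne]
    have hne := hw _ hflat
    intro heq
    apply hne
    rw [heq, head_replicate]
end Lemmas

section Runs
variable [DecidableEq α] [Inhabited α]

lemma lastRunLen_append_replicate {w : List α} {b : α} {n : ℕ} (hn : 1 ≤ n)
    (hw : ∀ c, w.getLast? = some c → c ≠ b) :
    lastRunLen (w ++ replicate n b) = n := by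
  rw [lastRunLen, runsOf_append_replicate hn hw, getLastD_concat, length_replicate]

lemma run_eq_replicate (z : List α) (k : ℕ) :
    (runsOf z).getD k [] = replicate (runLen z k) (runLetter z k) := by
  rcases lt_or_ge k (runsOf z).length with h | h
  · rw [runLen, runLetter, getD_eq_getElem _ _ h]
    have hmem : (runsOf z)[k] ∈ runsOf z := getElem_mem h
    have hch : ((runsOf z)[k]).IsChain (· = ·) := by
      refine (isChain_of_mem_splitBy hmem).imp ?_
      intro a b hab
      exact beq_iff_eq.mp hab
    exact chain'_eq_replicate hch
  · rw [runLen, runLetter]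
    rw [getD_eq_getElem?_getD, getElem?_eq_none (by omega), Option.getD_none]
    simp

lemma runLen_pos {z : List α} {k : ℕ} (h : k < numRuns z) : 1 ≤ runLen z k := by
  rw [runLen, getD_eq_getElem _ _ h]
  have hmem : (runsOf z)[k] ∈ runsOf z := getElem_mem h
  have := nil_notMem_splitBy (fun a b : α => a == b) z
  have hne : (runsOf z)[k] ≠ [] := fun h0 => this (h0 ▸ hmem)
  have := length_pos_iff.2 hne
  omega

lemma firstRuns_succ {z : List α} {k : ℕ} (h : k < numRuns z) :
    firstRuns (k + 1) z = firstRuns k z ++ replicate (runLen z k) (runLetter z k) := by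
  rw [firstRuns, firstRuns, take_succ, flatten_append]
  congr 1
  rw [getElem?_eq_getElem h]
  simp only [Option.toList_some, flatten_cons, flatten_nil, append_nil]
  rw [← getD_eq_getElem _ ([] : List α) h, run_eq_replicate]

lemma runPrefix_eq {z : List α} {k n : ℕ} (hn : n ≤ runLen z (k - 1)) :
    runPrefix k n z = firstRuns (k - 1) z ++ replicate n (runLetter z (k - 1)) := by
  rw [runPrefix, run_eq_replicate, take_replicate]
  congr 2
  omega

lemma getLast?_firstRuns {z : List α} {k : ℕ} (h1 : 1 ≤ k) (h2 : k ≤ numRuns z) :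
    (firstRuns k z).getLast? = some (runLetter z (k - 1)) := by
  obtain ⟨j, rfl⟩ : ∃ j, k = j + 1 := ⟨k - 1, by omega⟩
  have hj : j < numRuns z := by omega
  rw [firstRuns_succ hj, getLast?_append, getLast?_replicate]
  have : runLen z j ≠ 0 := by have := runLen_pos hj; omega
  simp [this]

lemma firstRuns_getLast_ne {z : List α} {k : ℕ} (h : k < numRuns z) :
    ∀ c, (firstRuns k z).getLast? = some c → c ≠ runLetter z k := by
  intro c hc
  rcases Nat.eq_zero_or_pos k with rfl | hk
  · rw [firstRuns] at hc
    simp at hc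
  · rw [getLast?_firstRuns hk (by omega)] at hc
    have hc' : c = runLetter z (k - 1) := (Option.some.inj hc).symm
    subst hc'
    -- adjacent run letters differ
    obtain ⟨j, rfl⟩ : ∃ j, k = j + 1 := ⟨k - 1, by omega⟩
    simp only [Nat.add_sub_cancel]
    have hch := isChain_getLast_head_splitBy (fun a b : α => a == b) z
    rw [show splitBy (fun a b : α => a == b) z = runsOf z from rfl] at hch
    rw [isChain_iff_getElem] at hch
    have hj' : j < (runsOf z).length - 1 := by
      have h9 := h; rw [numRuns] at h9; omega
    obtain ⟨ha, hb, hfalse⟩ := hch j (by omega)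
    rw [beq_eq_false_iff_ne] at hfalse
    intro heq
    apply hfalse
    have e1 : (runsOf z).get ⟨j, by omega⟩ =
        replicate (runLen z j) (runLetter z j) := by
      rw [List.get_eq_getElem, ← getD_eq_getElem _ ([] : List α), run_eq_replicate]
    have e2 : (runsOf z).get ⟨j + 1, by omega⟩ =
        replicate (runLen z (j + 1)) (runLetter z (j + 1)) := by
      rw [List.get_eq_getElem, ← getD_eq_getElem _ ([] : List α), run_eq_replicate]
    have hlen1 : runLen z j ≠ 0 := by have := runLen_pos (z := z) (k := j) (by omega); omega
    have hlen2 : runLen z (j + 1) ≠ 0 := by have := runLen_pos h; omega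
    have h5 : ((runsOf z).get ⟨j, by omega⟩).getLast? = some (runLetter z j) := by
      rw [e1, getLast?_replicate]
      simp [hlen1]
    have h6 : ((runsOf z).get ⟨j + 1, by omega⟩).head? = some (runLetter z (j + 1)) := by
      rw [e2, head?_replicate]
      simp [hlen2]
    simp only [List.get_eq_getElem] at h5 h6
    rw [getLast?_eq_getLast ha] at h5
    rw [head?_eq_head hb] at h6
    have h5' := Option.some.inj h5
    have h6' := Option.some.inj h6
    rw [h5', h6', heq]
end Runs

section Expand

lemma isExpansion_nil {w : List α} (h : IsExpansion [] w) : w = [] := by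
  obtain ⟨ks, h1, _, h3⟩ := h
  simp at h3
  exact h3

lemma isExpansion_nil' : IsExpansion ([] : List α) [] :=
  ⟨[], by simp [IsExpansionWith]⟩

lemma isExpansion_append {u v w : List α} (h : IsExpansion (u ++ v) w) :
    ∃ w1 w2, IsExpansion u w1 ∧ IsExpansion v w2 ∧ w = w1 ++ w2 := by
  obtain ⟨ks, h1, h2, h3⟩ := h
  rw [length_append] at h1
  refine ⟨(u.zip (ks.take u.length)).flatMap fun p => List.replicate p.2 p.1,
          (v.zip (ks.drop u.length)).flatMap fun p => List.replicate p.2 p.1, ?_, ?_, ?_⟩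
  · exact ⟨ks.take u.length, by rw [length_take]; omega,
      fun k hk => h2 k (mem_of_mem_take hk), rfl⟩
  · exact ⟨ks.drop u.length, by rw [length_drop]; omega,
      fun k hk => h2 k (mem_of_mem_drop hk), rfl⟩
  · rw [h3]
    conv_lhs => rw [← take_append_drop u.length ks]
    rw [zip_append (by rw [length_take]; omega), flatMap_append]

lemma isExpansion_append' {u v w1 w2 : List α} (h1 : IsExpansion u w1)
    (h2 : IsExpansion v w2) : IsExpansion (u ++ v) (w1 ++ w2) := by
  obtain ⟨ks1, ha1, ha2, ha3⟩ := h1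
  obtain ⟨ks2, hb1, hb2, hb3⟩ := h2
  refine ⟨ks1 ++ ks2, by simp [ha1, hb1], ?_, ?_⟩
  · intro k hk
    rcases mem_append.1 hk with h | h
    · exact ha2 k h
    · exact hb2 k h
  · rw [zip_append ha1.symm, flatMap_append, ha3, hb3]

lemma flatMap_zip_replicate (a : α) (ks : List ℕ) :
    ((List.replicate ks.length a).zip ks).flatMap (fun p => List.replicate p.2 p.1) =
      List.replicate ks.sum a := by
  induction ks with
  | nil => simp
  | cons k ks ih =>
    rw [length_cons, replicate_succ, zip_cons_cons, flatMap_cons, ih, sum_cons,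
      ← replicate_add]

lemma isExpansion_replicate {n : ℕ} {a : α} {w : List α}
    (h : IsExpansion (List.replicate n a) w) :
    ∃ m, w = List.replicate m a ∧ n ≤ m ∧ (n = 0 → m = 0) := by
  obtain ⟨ks, h1, h2, h3⟩ := h
  rw [length_replicate] at h1
  refine ⟨ks.sum, ?_, ?_, ?_⟩
  · rw [h3, ← h1, flatMap_zip_replicate]
  · rw [← h1]
    exact length_le_sum_of_one_le ks h2
  · intro hn
    subst hn
    have : ks = [] := length_eq_zero_iff.mp h1
    simp [this]

lemma flatMap_replicate_one (a : α) (j : ℕ) :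
    (List.replicate j (a, 1)).flatMap (fun p : α × ℕ => List.replicate p.2 p.1) =
      List.replicate j a := by
  induction j with
  | zero => simp
  | succ j ih => rw [replicate_succ, flatMap_cons, ih, replicate_succ]; rfl

lemma isExpansion_replicate' {n m : ℕ} {a : α} (h1 : n ≤ m) (h2 : n = 0 → m = 0) :
    IsExpansion (List.replicate n a) (List.replicate m a) := by
  cases n with
  | zero => rw [h2 rfl]; exact isExpansion_nil'
  | succ j =>
    refine ⟨(m - j) :: List.replicate j 1, by simp, ?_, ?_⟩
    · intro k hk
      rcases mem_cons.1 hk with h | h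
      · subst h; omega
      · have := eq_of_mem_replicate h; omega
    · rw [replicate_succ, zip_cons_cons, flatMap_cons]
      rw [show List.replicate j a = List.replicate (List.replicate j (1:ℕ)).length a by
        simp]
      rw [zip_replicate]
      simp only [min_self, length_replicate]
      rw [flatMap_replicate_one, ← replicate_add]
      congr 1
      omega

lemma isExpansion_getLast? {u w : List α} (h : IsExpansion u w) :
    w.getLast? = u.getLast? := by
  rcases eq_nil_or_concat u with rfl | ⟨L, c, rfl⟩
  · rw [isExpansion_nil h]
  · rw [concat_eq_append] at h ⊢
    obtain ⟨w1, w2, hw1, hw2, rfl⟩ := isExpansion_append h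
    have : [c] = List.replicate 1 c := by simp
    rw [this] at hw2
    obtain ⟨m, rfl, hm, _⟩ := isExpansion_replicate hw2
    rw [getLast?_append, getLast?_append, getLast?_replicate]
    have hm0 : m ≠ 0 := by omega
    simp [hm0]

end Expand

section Cost

lemma corrCost_append (d : α → α → ℝ) {u1 v1 : List α} (u2 v2 : List α)
    (h : u1.length = v1.length) :
    corrCost d (u1 ++ u2) (v1 ++ v2) = corrCost d u1 v1 + corrCost d u2 v2 := by
  rw [corrCost, corrCost, corrCost, zip_append h, map_append, sum_append]

lemma corrCost_replicate (d : α → α → ℝ) (n : ℕ) (a b : α) :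
    corrCost d (List.replicate n a) (List.replicate n b) = n * d a b := by
  rw [corrCost, zip_replicate, min_self, map_replicate, sum_replicate, nsmul_eq_mul]

lemma corrCost_cons (d : α → α → ℝ) (a b : α) (u v : List α) :
    corrCost d (a :: u) (b :: v) = d a b + corrCost d u v := by
  rw [corrCost, zip_cons_cons, map_cons, sum_cons, corrCost]

lemma corrCost_comm [MetricSpace α] (u v : List α) :
    corrCost dist u v = corrCost dist v u := by
  induction u generalizing v with
  | nil => cases v <;> simp [corrCost]
  | cons a u ih =>
    cases v with
    | nil => simp [corrCost]
    | cons b v => rw [corrCost_cons, corrCost_cons, dist_comm, ih]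

lemma corrCost_concat (d : α → α → ℝ) {u v : List α} (a b : α)
    (h : u.length = v.length) :
    corrCost d (u ++ [a]) (v ++ [b]) = corrCost d u v + d a b := by
  rw [corrCost_append d [a] [b] h]
  congr 1
  simp [corrCost]

end Cost

section ERealLemma

noncomputable def erealAddIso (c : ℝ) : EReal ≃o EReal := by
  refine Equiv.toOrderIso ⟨fun x => x + (c : EReal), fun x => x + ((-c : ℝ) : EReal), ?_, ?_⟩ ?_ ?_
  · intro x
    simp only
    rw [add_assoc, ← EReal.coe_add]
    simp
  · intro x
    simp only
    rw [add_assoc, ← EReal.coe_add]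
    simp
  · intro x y h
    exact add_le_add_left h _
  · intro x y h
    exact add_le_add_left h _

lemma sInf_image_add (T : Set EReal) (c : ℝ) :
    sInf ((fun t => t + (c : EReal)) '' T) = sInf T + (c : EReal) := by
  have h := (erealAddIso c).map_sInf T
  have he : ∀ x : EReal, erealAddIso c x = x + (c : EReal) := fun x => rfl
  simp only [he] at h
  rw [sInf_image] at *
  exact h.symm

end ERealLemma

/-- decomposition of an expansion of `W ++ replicate n aL`. -/
lemma decompose_exp {W : List α} {aL : α} {n : ℕ} {w : List α}
    (hexp : IsExpansion (W ++ List.replicate n aL) w) :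
    ∃ w0 m, IsExpansion W w0 ∧ w = w0 ++ List.replicate m aL ∧ n ≤ m ∧ (n = 0 → m = 0) ∧
      w0.getLast? = W.getLast? := by
  obtain ⟨w1, w2, h1, h2, rfl⟩ := isExpansion_append hexp
  obtain ⟨m, rfl, hm1, hm2⟩ := isExpansion_replicate h2
  exact ⟨w1, m, h1, rfl, hm1, hm2, isExpansion_getLast? h1⟩


/-- The recurrence for `SP(x, y, rx, ry, oy)` in the case `l_x > o_y`. -/
theorem stmt16 [MetricSpace α] [DecidableEq α] [Inhabited α] (x y : List α)
    (rx ry oy : ℕ) (hrx : 1 ≤ rx) (hrx' : rx ≤ numRuns x)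
    (hry : 1 ≤ ry) (hry' : ry ≤ numRuns y)
    (hoy : 1 ≤ oy) (hoy' : oy ≤ runLen y (ry - 1))
    (hcase : oy < runLen x (rx - 1)) :
    SP dist x y rx ry oy =
      min (SP dist x y rx ry (oy - 1) +
            ((dist (runLetter x (rx - 1)) (runLetter y (ry - 1)) : ℝ) : EReal))
          (SP dist y x (ry - 1) rx (runLen x (rx - 1) - oy) +
            ((dist (runLetter x (rx - 1)) (runLetter y (ry - 1)) *
              (oy : ℝ) : ℝ) : EReal)) := by
  have hnx : rx - 1 < numRuns x := by omega
  have hny : ry - 1 < numRuns y := by omega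
  set A := runLetter x (rx - 1) with hA
  set B := runLetter y (ry - 1) with hB
  set LX := runLen x (rx - 1) with hLX
  have hLXpos : 1 ≤ LX := runLen_pos hnx
  have hx1 : firstRuns rx x = firstRuns (rx - 1) x ++ List.replicate LX A := by
    have h := firstRuns_succ hnx
    rw [show rx - 1 + 1 = rx by omega] at h
    exact h
  have hWxlast : ∀ c, (firstRuns (rx-1) x).getLast? = some c → c ≠ A :=
    firstRuns_getLast_ne hnx
  have hWylast : ∀ c, (firstRuns (ry-1) y).getLast? = some c → c ≠ B :=
    firstRuns_getLast_ne hny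
  have hyn : ∀ n, n ≤ runLen y (ry - 1) →
      runPrefix ry n y = firstRuns (ry-1) y ++ List.replicate n B :=
    fun n hn => runPrefix_eq hn
  have hxn : ∀ n, n ≤ LX →
      runPrefix rx n x = firstRuns (rx-1) x ++ List.replicate n A :=
    fun n hn => runPrefix_eq hn
  set f : List α × List α → EReal :=
    fun p => ((corrCost dist p.1 p.2 : ℝ) : EReal) with hf
  set S1 : Set (List α × List α) :=
    {p | IsCorrespondence (firstRuns rx x) (runPrefix ry oy y) p.1 p.2 ∧
         (0 < oy → lastRunLen p.2 = oy)} with hS1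
  set SA : Set (List α × List α) :=
    {p | IsCorrespondence (firstRuns rx x) (runPrefix ry (oy - 1) y) p.1 p.2 ∧
         (0 < oy - 1 → lastRunLen p.2 = oy - 1)} with hSA
  set SB : Set (List α × List α) :=
    {p | IsCorrespondence (firstRuns (ry - 1) y) (runPrefix rx (LX - oy) x) p.1 p.2 ∧
         (0 < LX - oy → lastRunLen p.2 = LX - oy)} with hSB
  have hseteq : f '' S1 =
      ((fun t => t + ((dist A B : ℝ) : EReal)) '' (f '' SA)) ∪
      ((fun t => t + ((dist A B * (oy : ℝ) : ℝ) : EReal)) '' (f '' SB)) := by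
    apply Set.Subset.antisymm
    · rintro t ⟨⟨xb, yb⟩, hp, rfl⟩
      rw [hS1, Set.mem_setOf_eq] at hp
      dsimp only at hp
      obtain ⟨⟨hxbexp, hybexp, hlen⟩, hcon⟩ := hp
      have hlast : lastRunLen yb = oy := hcon hoy
      rw [hx1] at hxbexp
      obtain ⟨xb0, m, hxb0, rfl, hmlx, -, hxb0last⟩ := decompose_exp hxbexp
      rw [hyn oy hoy'] at hybexp
      obtain ⟨yb0, m', hyb0, hybeq, hm'oy, -, hyb0last⟩ := decompose_exp hybexp
      subst hybeq
      have hyb0ne : ∀ c, yb0.getLast? = some c → c ≠ B := by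
        intro c hc; exact hWylast c (hyb0last ▸ hc)
      have hxb0ne : ∀ c, xb0.getLast? = some c → c ≠ A := by
        intro c hc; exact hWxlast c (hxb0last ▸ hc)
      have hm' : m' = oy := by
        have h1 : lastRunLen (yb0 ++ List.replicate m' B) = m' :=
          lastRunLen_append_replicate (by omega) hyb0ne
        omega
      rw [hm'] at hlen ⊢
      simp only [length_append, length_replicate] at hlen
      rcases Nat.lt_or_ge LX m with hmgt | hmle
      · -- m > LX: left branch
        left
        refine ⟨f (xb0 ++ List.replicate (m-1) A, yb0 ++ List.replicate (oy-1) B),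
          ⟨_, ?_, rfl⟩, ?_⟩
        · rw [hSA, Set.mem_setOf_eq]
          refine ⟨⟨?_, ?_, ?_⟩, ?_⟩
          · rw [hx1]
            exact isExpansion_append' hxb0 (isExpansion_replicate' (by omega) (by omega))
          · rw [hyn (oy-1) (by omega)]
            exact isExpansion_append' hyb0 (isExpansion_replicate' le_rfl (fun h => h))
          · simp only [length_append, length_replicate]; omega
          · intro h
            exact lastRunLen_append_replicate (by omega) hyb0ne
        · simp only [hf]
          rw [← EReal.coe_add]
          congr 1
          have e1 : xb0 ++ List.replicate m A =
              (xb0 ++ List.replicate (m-1) A) ++ [A] := by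
            conv_lhs => rw [show m = (m-1)+1 by omega]
            rw [replicate_succ', ← append_assoc]
          have e2 : yb0 ++ List.replicate oy B =
              (yb0 ++ List.replicate (oy-1) B) ++ [B] := by
            conv_lhs => rw [show oy = (oy-1)+1 by omega]
            rw [replicate_succ', ← append_assoc]
          rw [e1, e2, corrCost_concat dist A B
            (by simp only [length_append, length_replicate]; omega)]
      · -- m = LX: right branch
        right
        have hmeq : m = LX := by omega
        rw [hmeq] at hlen ⊢
        refine ⟨f (yb0, xb0 ++ List.replicate (LX - oy) A),
          ⟨_, ?_, rfl⟩, ?_⟩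
        · rw [hSB, Set.mem_setOf_eq]
          refine ⟨⟨hyb0, ?_, ?_⟩, ?_⟩
          · rw [hxn (LX - oy) (by omega)]
            exact isExpansion_append' hxb0 (isExpansion_replicate' le_rfl (fun h => h))
          · simp only [length_append, length_replicate]; omega
          · intro h
            exact lastRunLen_append_replicate (by omega) hxb0ne
        · simp only [hf]
          rw [← EReal.coe_add]
          congr 1
          have e3 : List.replicate LX A =
              List.replicate (LX - oy) A ++ List.replicate oy A := by
            rw [← replicate_add]
            congr 1
            omega
          rw [e3, ← append_assoc,
            corrCost_append dist _ _
              (by simp only [length_append, length_replicate]; omega),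
            corrCost_replicate, corrCost_comm]
          ring
    · rintro t (⟨s, ⟨⟨xb, yb⟩, hpA, rfl⟩, rfl⟩ | ⟨s, ⟨⟨yb2, xb2⟩, hpB, rfl⟩, rfl⟩)
      · -- from SA
        rw [hSA, Set.mem_setOf_eq] at hpA
        dsimp only at hpA
        obtain ⟨⟨hxbexp, hybexp, hlen⟩, hconA⟩ := hpA
        rw [hx1] at hxbexp
        obtain ⟨xb0, m, hxb0, rfl, hmlx, -, hxb0last⟩ := decompose_exp hxbexp
        rw [hyn (oy-1) (by omega)] at hybexp
        obtain ⟨yb0, m', hyb0, hybeq, hm'oy, hm'z, hyb0last⟩ := decompose_exp hybexp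
        subst hybeq
        have hyb0ne : ∀ c, yb0.getLast? = some c → c ≠ B := by
          intro c hc; exact hWylast c (hyb0last ▸ hc)
        have hm' : m' = oy - 1 := by
          rcases Nat.eq_zero_or_pos (oy - 1) with h0 | hpos
          · omega
          · have h1 : lastRunLen (yb0 ++ List.replicate m' B) = m' :=
              lastRunLen_append_replicate (by omega) hyb0ne
            have h2 := hconA hpos
            omega
        subst hm'
        simp only [length_append, length_replicate] at hlen
        refine ⟨(xb0 ++ List.replicate (m+1) A, yb0 ++ List.replicate oy B), ?_, ?_⟩
        · rw [hS1, Set.mem_setOf_eq]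
          refine ⟨⟨?_, ?_, ?_⟩, ?_⟩
          · rw [hx1]
            exact isExpansion_append' hxb0 (isExpansion_replicate' (by omega) (by omega))
          · rw [hyn oy hoy']
            exact isExpansion_append' hyb0 (isExpansion_replicate' le_rfl (fun h => h))
          · simp only [length_append, length_replicate]; omega
          · intro h
            exact lastRunLen_append_replicate (by omega) hyb0ne
        · simp only [hf]
          rw [← EReal.coe_add]
          congr 1
          have e1 : xb0 ++ List.replicate (m+1) A =
              (xb0 ++ List.replicate m A) ++ [A] := by
            rw [replicate_succ', ← append_assoc]
          have e2 : yb0 ++ List.replicate oy B =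
              (yb0 ++ List.replicate (oy-1) B) ++ [B] := by
            conv_lhs => rw [show oy = (oy-1)+1 by omega]
            rw [replicate_succ', ← append_assoc]
          rw [e1, e2, corrCost_concat dist A B
            (by simp only [length_append, length_replicate]; omega)]
      · -- from SB
        rw [hSB, Set.mem_setOf_eq] at hpB
        dsimp only at hpB
        obtain ⟨⟨hybexp, hxbexp, hlen⟩, hconB⟩ := hpB
        rw [hxn (LX - oy) (by omega)] at hxbexp
        obtain ⟨xb0, m, hxb0, hxbeq, hmlx, -, hxb0last⟩ := decompose_exp hxbexp
        subst hxbeq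
        have hxb0ne : ∀ c, xb0.getLast? = some c → c ≠ A := by
          intro c hc; exact hWxlast c (hxb0last ▸ hc)
        have hyb2ne : ∀ c, yb2.getLast? = some c → c ≠ B := by
          intro c hc
          exact hWylast c ((isExpansion_getLast? hybexp) ▸ hc)
        have hm : m = LX - oy := by
          have h1 : lastRunLen (xb0 ++ List.replicate m A) = m :=
            lastRunLen_append_replicate (by omega) hxb0ne
          have h2 := hconB (by omega)
          omega
        subst hm
        simp only [length_append, length_replicate] at hlen
        refine ⟨((xb0 ++ List.replicate (LX - oy) A) ++ List.replicate oy A,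
                 yb2 ++ List.replicate oy B), ?_, ?_⟩
        · rw [hS1, Set.mem_setOf_eq]
          refine ⟨⟨?_, ?_, ?_⟩, ?_⟩
          · rw [hx1]
            have e4 : (xb0 ++ List.replicate (LX - oy) A) ++ List.replicate oy A =
                xb0 ++ List.replicate LX A := by
              rw [append_assoc, ← replicate_add]
              have : LX - oy + oy = LX := by omega
              rw [this]
            rw [e4]
            exact isExpansion_append' hxb0 (isExpansion_replicate' le_rfl (fun h => h))
          · rw [hyn oy hoy']
            exact isExpansion_append' hybexp (isExpansion_replicate' le_rfl (fun h => h))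
          · simp only [length_append, length_replicate]; omega
          · intro h
            exact lastRunLen_append_replicate (by omega) hyb2ne
        · simp only [hf]
          rw [← EReal.coe_add]
          congr 1
          rw [corrCost_append dist _ _
            (by simp only [length_append, length_replicate]; omega),
            corrCost_replicate, corrCost_comm]
          ring
  show sInf (f '' S1) = _
  rw [hseteq, sInf_union, sInf_image_add, sInf_image_add]
  rfl
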